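/- Let K be a field and (η_0, ..., η_k) a reshaping sequence with η_k = 1. Let P ⊆ K² be a finite point set, I = Γ(P) its vanishing ideal, and suppose (g_1, ..., g_k) is an η-reshaper for I, i.e., g_i = y^{η_i} + ĝ_i ∈ I with deg_y ĝ_i ≤ 2η_i − η_{i−1}. Then for any f ∈ K[x,y] with deg_y f < η_0, iterating the reduction step (replacing f by f_1·(−ĝ_i) + f_0 where f = f_1 y^{η_i} + f_0, deg_y f_0 < η_i, for i = 1, ..., k) produces a polynomial f̂ ∈ f + I with deg_y f̂ = 0 (i.e., f̂ ∈ K[x]) and deg_x f̂ ≤ deg_x f + Σ_{i=1}^k deg_x g_i, and moreover f̂(α) = f(α, β) for every (α, β) ∈ P. -/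

import Mathlib

/-- A reshaping sequence: positive integers with `η (i-1) > η i ≥ ⌊2·η (i-1)/3⌋`. -/
def IsReshapingSeq (k : ℕ) (η : ℕ → ℕ) : Prop :=
  (∀ i ≤ k, 0 < η i) ∧ ∀ i, 1 ≤ i → i ≤ k → η i < η (i - 1) ∧ 2 * η (i - 1) / 3 ≤ η i

/-- A bivariate polynomial over `K` as an element of `K[x][y]` (`y` the outer
variable); its `x`-degree is the max of the `x`-degrees of its coefficients. -/
noncomputable def degX {K : Type*} [Field K] (h : Polynomial (Polynomial K)) : ℕ :=
  h.support.sup fun j => (h.coeff j).natDegree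

/-- Evaluation of a bivariate polynomial in `K[x][y]` at a point `(a, b)`. -/
noncomputable def evalXY {K : Type*} [Field K] (h : Polynomial (Polynomial K)) (a b : K) : K :=
  (h.map (Polynomial.evalRingHom a)).eval b

lemma coeff_natDegree_le_degX {K : Type*} [Field K] (h : Polynomial (Polynomial K)) (j : ℕ) :
    (h.coeff j).natDegree ≤ degX h := by
  by_cases hj : h.coeff j = 0
  · simp [hj]
  · exact Finset.le_sup (f := fun j => (h.coeff j).natDegree)
      (Polynomial.mem_support_iff.mpr hj)

lemma degX_le {K : Type*} [Field K] (h : Polynomial (Polynomial K)) (n : ℕ)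
    (hn : ∀ j, (h.coeff j).natDegree ≤ n) : degX h ≤ n :=
  Finset.sup_le fun j _ => hn j

lemma degX_mul_le {K : Type*} [Field K] (p q2 : Polynomial (Polynomial K)) :
    degX (p * q2) ≤ degX p + degX q2 := by
  apply degX_le
  intro j
  rw [Polynomial.coeff_mul]
  apply Polynomial.natDegree_sum_le_of_forall_le
  intro x hx
  calc (p.coeff x.1 * q2.coeff x.2).natDegree
      ≤ (p.coeff x.1).natDegree + (q2.coeff x.2).natDegree := Polynomial.natDegree_mul_le
    _ ≤ _ := add_le_add (coeff_natDegree_le_degX _ _) (coeff_natDegree_le_degX _ _)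

theorem stmt_19 {K : Type*} [Field K] (k : ℕ) (hk : 1 ≤ k) (η : ℕ → ℕ)
    (hη : IsReshapingSeq k η) (hηk : η k = 1)
    (P : Finset (K × K))
    (g gg : ℕ → Polynomial (Polynomial K))
    (hgform : ∀ i, 1 ≤ i → i ≤ k → g i = Polynomial.X ^ (η i) + gg i)
    (hggdeg : ∀ i, 1 ≤ i → i ≤ k →
      ((gg i).natDegree : ℤ) ≤ 2 * (η i : ℤ) - (η (i - 1) : ℤ))
    (hgvan : ∀ i, 1 ≤ i → i ≤ k → ∀ p ∈ P, evalXY (g i) p.1 p.2 = 0)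
    (f : Polynomial (Polynomial K)) (hf : f.natDegree < η 0)
    (F q r : ℕ → Polynomial (Polynomial K))
    (hF0 : F 0 = f)
    (hstep : ∀ i, 1 ≤ i → i ≤ k →
      F (i - 1) = q i * Polynomial.X ^ (η i) + r i ∧
        (r i).degree < ((η i : ℕ) : WithBot ℕ) ∧
        F i = q i * (-(gg i)) + r i) :
    (∀ p ∈ P, evalXY (F k - f) p.1 p.2 = 0) ∧
      (F k).natDegree = 0 ∧
      degX (F k) ≤ degX f + ∑ i ∈ Finset.Icc 1 k, degX (g i) ∧
      ∀ p ∈ P, Polynomial.eval p.1 ((F k).coeff 0) = evalXY f p.1 p.2 := by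
  obtain ⟨hpos, hmono⟩ := hη
  -- degX gg i ≤ degX g i
  have hggX : ∀ i, 1 ≤ i → i ≤ k → degX (gg i) ≤ degX (g i) := by
    intro i h1 h2
    apply degX_le
    intro j
    have : gg i = g i - Polynomial.X ^ (η i) := by rw [hgform i h1 h2]; ring
    rw [this, Polynomial.coeff_sub, Polynomial.coeff_X_pow]
    by_cases hj : j = η i
    · simp only [hj, if_pos rfl]
      calc ((g i).coeff (η i) - 1).natDegree
          ≤ max ((g i).coeff (η i)).natDegree (1 : Polynomial K).natDegree :=
            Polynomial.natDegree_sub_le _ _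
        _ ≤ degX (g i) := by
            simp only [Polynomial.natDegree_one, max_le_iff]
            exact ⟨coeff_natDegree_le_degX _ _, Nat.zero_le _⟩
    · simp only [if_neg hj, sub_zero]
      exact coeff_natDegree_le_degX _ _
  -- Main induction
  have key : ∀ i ≤ k, (∀ p ∈ P, evalXY (F i) p.1 p.2 = evalXY f p.1 p.2) ∧
      (F i).natDegree < η i ∧
      degX (F i) ≤ degX f + ∑ j ∈ Finset.Icc 1 i, degX (g j) := by
    intro i
    induction i with
    | zero => intro _; simp [hF0, hf]
    | succ n ih =>
      intro hn1
      obtain ⟨ihe, ihd, ihx⟩ := ih (by omega)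
      obtain ⟨h1, h2, h3⟩ := hstep (n + 1) (by omega) hn1
      simp only [Nat.add_sub_cancel] at h1
      set m := η (n + 1) with hm
      have hmpos : 0 < m := hpos (n + 1) hn1
      -- F (n+1) = F n - q (n+1) * g (n+1)
      have hFstep : F (n + 1) = F n - q (n + 1) * g (n + 1) := by
        rw [h3, hgform (n + 1) (by omega) hn1, h1]; ring
      -- natDegree of r
      have hrd : (r (n + 1)).natDegree < m := by
        by_cases hr0 : r (n + 1) = 0
        · simp [hr0, hmpos]
        · exact Polynomial.natDegree_lt_iff_degree_lt hr0 |>.mpr h2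
      constructor
      · -- evaluation
        intro p hp
        rw [hFstep]
        unfold evalXY at *
        simp only [Polynomial.map_sub, Polynomial.map_mul, Polynomial.eval_sub,
          Polynomial.eval_mul]
        rw [hgvan (n + 1) (by omega) hn1 p hp, mul_zero, sub_zero]
        exact ihe p hp
      have hdeg : (F (n + 1)).natDegree < m := by
        by_cases hq0 : q (n + 1) = 0
        · -- F (n+1) = r (n+1)
          have : F (n + 1) = r (n + 1) := by rw [h3, hq0]; ring
          rw [this]; exact hrd
        · -- q ≠ 0 : natDegree q + m ≤ natDegree F n
          have hqx : q (n + 1) * Polynomial.X ^ m = F n - r (n + 1) := by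
            rw [h1]; ring
          have hqm : (q (n + 1)).natDegree + m < η n := by
            have e1 : (q (n + 1) * Polynomial.X ^ m).natDegree
                = (q (n + 1)).natDegree + m := by
              rw [Polynomial.natDegree_mul hq0 (pow_ne_zero _ Polynomial.X_ne_zero), Polynomial.natDegree_X_pow]
            have e2 : (q (n + 1) * Polynomial.X ^ m).natDegree ≤
                max (F n).natDegree (r (n + 1)).natDegree := by
              rw [hqx]; exact Polynomial.natDegree_sub_le _ _
            rw [e1] at e2
            rcases max_cases (F n).natDegree (r (n + 1)).natDegree with ⟨he, _⟩ | ⟨he, _⟩ <;>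
              rw [he] at e2 <;> omega
          have hggd := hggdeg (n + 1) (by omega) hn1
          simp only [Nat.add_sub_cancel] at hggd
          have hprod : (q (n + 1)).natDegree + (gg (n + 1)).natDegree < m := by
            have : ((q (n + 1)).natDegree : ℤ) + m < (η n : ℤ) := by exact_mod_cast hqm
            omega
          rw [h3]
          calc (q (n + 1) * -gg (n + 1) + r (n + 1)).natDegree
              ≤ max (q (n + 1) * -gg (n + 1)).natDegree (r (n + 1)).natDegree :=
                Polynomial.natDegree_add_le _ _
            _ < m := by
                apply max_lt _ hrd
                calc (q (n + 1) * -gg (n + 1)).natDegree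
                    ≤ (q (n + 1)).natDegree + (-gg (n + 1)).natDegree :=
                      Polynomial.natDegree_mul_le
                  _ = (q (n + 1)).natDegree + (gg (n + 1)).natDegree := by
                      rw [Polynomial.natDegree_neg]
                  _ < m := hprod
      refine ⟨hdeg, ?_⟩
      -- degX bound
      have hqX : degX (q (n + 1)) ≤ degX (F n) := by
        apply degX_le
        intro j
        have : (q (n + 1)).coeff j = (F n).coeff (j + m) := by
          have := congrArg (fun h => Polynomial.coeff h (j + m)) h1
          simp only [Polynomial.coeff_add, Polynomial.coeff_mul_X_pow] at this
          have hr0 : (r (n + 1)).coeff (j + m) = 0 := by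
            apply Polynomial.coeff_eq_zero_of_degree_lt
            exact lt_of_lt_of_le h2 (by exact_mod_cast Nat.le_add_left m j)
          rw [hr0, add_zero] at this
          exact this.symm
        rw [this]
        exact coeff_natDegree_le_degX _ _
      have hrX : degX (r (n + 1)) ≤ degX (F n) := by
        apply degX_le
        intro j
        by_cases hjm : j < m
        · have : (r (n + 1)).coeff j = (F n).coeff j := by
            have := congrArg (fun h => Polynomial.coeff h j) h1
            simp only [Polynomial.coeff_add] at this
            rw [Polynomial.coeff_mul_X_pow' (q (n+1)) m j, if_neg (by omega)] at this
            rw [this, zero_add]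
          rw [this]
          exact coeff_natDegree_le_degX _ _
        · have : (r (n + 1)).coeff j = 0 := by
            apply Polynomial.coeff_eq_zero_of_degree_lt
            exact lt_of_lt_of_le h2 (by exact_mod_cast Nat.le_of_not_lt hjm)
          simp [this]
      have hs : ∑ j ∈ Finset.Icc 1 (n + 1), degX (g j)
          = (∑ j ∈ Finset.Icc 1 n, degX (g j)) + degX (g (n + 1)) := by
        rw [Finset.sum_Icc_succ_top (by omega)]
      rw [h3, hs]
      calc degX (q (n + 1) * -gg (n + 1) + r (n + 1))
          ≤ max (degX (q (n + 1) * -gg (n + 1))) (degX (r (n + 1))) := by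
            apply degX_le
            intro j
            simp only [Polynomial.coeff_add]
            calc ((q (n + 1) * -gg (n + 1)).coeff j + (r (n + 1)).coeff j).natDegree
                ≤ max ((q (n + 1) * -gg (n + 1)).coeff j).natDegree
                    ((r (n + 1)).coeff j).natDegree := Polynomial.natDegree_add_le _ _
              _ ≤ _ := max_le_max (coeff_natDegree_le_degX _ _) (coeff_natDegree_le_degX _ _)
        _ ≤ degX f + ((∑ j ∈ Finset.Icc 1 n, degX (g j)) + degX (g (n + 1))) := by
            apply max_le
            · calc degX (q (n + 1) * -gg (n + 1))
                  ≤ degX (q (n + 1)) + degX (-gg (n + 1)) := degX_mul_le _ _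
                _ = degX (q (n + 1)) + degX (gg (n + 1)) := by
                    congr 1
                    unfold degX
                    simp [Polynomial.natDegree_neg]
                _ ≤ degX (F n) + degX (g (n + 1)) :=
                    add_le_add hqX (hggX (n + 1) (by omega) hn1)
                _ ≤ _ := by omega
            · calc degX (r (n + 1)) ≤ degX (F n) := hrX
                _ ≤ _ := by omega
  obtain ⟨ke, kd, kx⟩ := key k le_rfl
  have hnd : (F k).natDegree = 0 := by omega
  refine ⟨?_, hnd, kx, ?_⟩
  · intro p hp
    unfold evalXY at *
    simp only [Polynomial.map_sub, Polynomial.eval_sub]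
    rw [ke p hp]; ring
  · intro p hp
    have hC : F k = Polynomial.C ((F k).coeff 0) := (Polynomial.eq_C_of_natDegree_eq_zero hnd)
    have := ke p hp
    rw [hC] at this
    unfold evalXY at this
    simpa [evalXY] using this
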